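/- Let F ∈ ℂ[x_1,…,x_n] be a nonzero homogeneous form of degree d, let α ∈ T_1 be a linear form in the dual variables, and suppose F = c_1 ℓ_1^d + … + c_r ℓ_r^d where ℓ_1,…,ℓ_r are linear forms and c_i ∈ ℂ. If α∘ℓ_i ≠ 0 for every i (i.e., no point [ℓ_i] lies on the hyperplane defined by α), then r ≥ al(F) − al(α∘F). -/

import Mathlib

open MvPolynomial

/-- The iterated partial derivative `∂^m` applied to `F`: on a monomial `x^k` it gives
`(∏ᵢ kᵢ(kᵢ-1)⋯(kᵢ-mᵢ+1)) · x^(k-m)`, i.e. each dual variable `αᵢ` acts as `∂/∂xᵢ`. -/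
noncomputable def mderiv {σ : Type*} (m : σ →₀ ℕ) (F : MvPolynomial σ ℂ) :
    MvPolynomial σ ℂ :=
  (AddMonoidAlgebra.coeff F).sum fun k c =>
    MvPolynomial.monomial (k - m) (c * ∏ i ∈ m.support, (Nat.descFactorial (k i) (m i) : ℂ))

/-- The apolarity action `Θ ∘ F` of a polynomial `Θ` in the dual variables on `F`,
as a constant-coefficient differential operator. -/
noncomputable def diffOp {σ : Type*} (Θ F : MvPolynomial σ ℂ) : MvPolynomial σ ℂ :=
  (AddMonoidAlgebra.coeff Θ).sum fun m c => c • mderiv m F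

/-- Apolar length `al F`: the dimension of the space `Diff(F) = {Θ ∘ F : Θ ∈ T}` of all
partial derivatives of `F` of all orders (including `F` itself). -/
noncomputable def apolarLength {σ : Type*} (F : MvPolynomial σ ℂ) : ℕ :=
  Module.finrank ℂ (Submodule.span ℂ (Set.range fun Θ => diffOp Θ F))

/-- The Hilbert function of the apolar algebra of `F`: the dimension of the span of the
`i`-th order partial derivatives `{Θ ∘ F : Θ homogeneous of degree i}`. -/
noncomputable def hilbFn {σ : Type*} (F : MvPolynomial σ ℂ) (i : ℕ) : ℕ :=
  Module.finrank ℂ (Submodule.span ℂ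
    {G : MvPolynomial σ ℂ | ∃ Θ : MvPolynomial σ ℂ, Θ.IsHomogeneous i ∧ diffOp Θ F = G})

/-- Waring rank of a degree-`d` form: the least `r` such that
`F = c₁ ℓ₁^d + ⋯ + c_r ℓ_r^d` for linear forms `ℓᵢ` and scalars `cᵢ ∈ ℂ`. -/
noncomputable def waringRank {σ : Type*} [Fintype σ] (d : ℕ) (F : MvPolynomial σ ℂ) : ℕ :=
  sInf {r : ℕ | ∃ (c : Fin r → ℂ) (v : Fin r → σ → ℂ),
    F = ∑ i, c i • (∑ j, v i j • MvPolynomial.X j) ^ d}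


section StmtAux

variable {σ : Type*}

private lemma desc_add (k a b : ℕ) :
    k.descFactorial (a + b) = k.descFactorial a * (k - a).descFactorial b := by
  induction b with
  | zero => simp
  | succ b ih =>
    rw [← Nat.add_assoc, Nat.descFactorial_succ, ih, Nat.descFactorial_succ, Nat.sub_sub]
    ring

private lemma prod_desc_subset (k m : σ →₀ ℕ) (S : Finset σ) (h : m.support ⊆ S) :
    ∏ i ∈ m.support, (Nat.descFactorial (k i) (m i) : ℂ) =
    ∏ i ∈ S, (Nat.descFactorial (k i) (m i) : ℂ) := by
  refine Finset.prod_subset h fun i _ hi => ?_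
  rw [Finsupp.notMem_support_iff.mp hi]
  simp

lemma mderiv_monomial (m k : σ →₀ ℕ) (c : ℂ) :
    mderiv m (monomial k c) =
      monomial (k - m) (c * ∏ i ∈ m.support, (Nat.descFactorial (k i) (m i) : ℂ)) := by
  unfold mderiv
  exact sum_monomial_eq (by simp)

lemma mderiv_add (m : σ →₀ ℕ) (F G : MvPolynomial σ ℂ) :
    mderiv m (F + G) = mderiv m F + mderiv m G := by
  unfold mderiv
  rw [AddMonoidAlgebra.coeff_add]
  exact Finsupp.sum_add_index' (fun k => by simp) (fun k c₁ c₂ => by rw [add_mul, map_add])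

lemma mderiv_smul (m : σ →₀ ℕ) (a : ℂ) (F : MvPolynomial σ ℂ) :
    mderiv m (a • F) = a • mderiv m F := by
  unfold mderiv
  rw [AddMonoidAlgebra.coeff_smul, Finsupp.sum_smul_index' (fun k => by simp), Finsupp.smul_sum]
  congr 1; funext k c
  simp [smul_eq_mul, mul_assoc, MvPolynomial.smul_monomial]

lemma mderiv_zero (F : MvPolynomial σ ℂ) : mderiv 0 F = F := by
  unfold mderiv
  simp only [Finsupp.support_zero, Finset.prod_empty, mul_one, tsub_zero]
  conv_rhs => rw [← support_sum_monomial_coeff F]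
  rw [MvPolynomial.sum_def]

lemma mderiv_mderiv (m m' : σ →₀ ℕ) (F : MvPolynomial σ ℂ) :
    mderiv m (mderiv m' F) = mderiv (m' + m) F := by
  classical
  induction F using MvPolynomial.induction_on' with
  | add p q hp hq => rw [mderiv_add, mderiv_add, mderiv_add, hp, hq]
  | monomial k c =>
    rw [mderiv_monomial, mderiv_monomial, mderiv_monomial, mul_assoc,
      tsub_add_eq_tsub_tsub]
    congr 1
    have hU1 : m'.support ⊆ m.support ∪ m'.support := Finset.subset_union_right
    have hU2 : m.support ⊆ m.support ∪ m'.support := Finset.subset_union_left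
    have hU3 : (m' + m).support ⊆ m.support ∪ m'.support := by
      refine Finsupp.support_add.trans ?_
      rw [Finset.union_comm m'.support]
    rw [prod_desc_subset k m' _ hU1, prod_desc_subset (k - m') m _ hU2,
      prod_desc_subset k (m' + m) _ hU3, ← Finset.prod_mul_distrib]
    congr 1
    refine Finset.prod_congr rfl fun i _ => ?_
    rw [Finsupp.add_apply, desc_add, Finsupp.tsub_apply]
    push_cast
    ring

lemma mderiv_single_one [DecidableEq σ] (j : σ) (F : MvPolynomial σ ℂ) :
    mderiv (Finsupp.single j 1) F = pderiv j F := by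
  induction F using MvPolynomial.induction_on' with
  | add p q hp hq => rw [mderiv_add, map_add, hp, hq]
  | monomial k c =>
    rw [mderiv_monomial, pderiv_monomial, Finsupp.support_single_ne_zero j one_ne_zero,
      Finset.prod_singleton, Finsupp.single_eq_same, Nat.descFactorial_one]

noncomputable def mderivL (m : σ →₀ ℕ) : MvPolynomial σ ℂ →ₗ[ℂ] MvPolynomial σ ℂ where
  toFun := mderiv m
  map_add' := mderiv_add m
  map_smul' := mderiv_smul m

noncomputable def diffOpL (Θ : MvPolynomial σ ℂ) : MvPolynomial σ ℂ →ₗ[ℂ] MvPolynomial σ ℂ :=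
  (AddMonoidAlgebra.coeff Θ).sum fun m c => c • mderivL m

lemma diffOpL_apply (Θ F : MvPolynomial σ ℂ) : diffOpL Θ F = diffOp Θ F := by
  unfold diffOpL diffOp Finsupp.sum
  rw [LinearMap.coe_sum, Finset.sum_apply]
  rfl

lemma mderiv_finset_sum {ι : Type*} (s : Finset ι) (f : ι → MvPolynomial σ ℂ) (m : σ →₀ ℕ) :
    mderiv m (∑ i ∈ s, f i) = ∑ i ∈ s, mderiv m (f i) :=
  map_sum (mderivL m) f s

lemma diffOp_apply_sum (Θ F : MvPolynomial σ ℂ) :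
    diffOp Θ F = ∑ m ∈ Θ.support, MvPolynomial.coeff m Θ • mderiv m F := by
  rw [diffOp, MvPolynomial.sum_def]

lemma mderiv_mem_of_closed (W : Submodule ℂ (MvPolynomial σ ℂ))
    (hW : ∀ (j : σ) P, P ∈ W → pderiv j P ∈ W) :
    ∀ (m : σ →₀ ℕ) (P), P ∈ W → mderiv m P ∈ W := by
  classical
  intro m
  induction m using Finsupp.induction with
  | zero => intro P hP; rwa [mderiv_zero]
  | single_add a b f ha hb ih =>
    have hsingle : ∀ (b : ℕ) (Q), Q ∈ W → mderiv (Finsupp.single a b) Q ∈ W := by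
      intro b
      induction b with
      | zero => intro Q hQ; rwa [Finsupp.single_zero, mderiv_zero]
      | succ b ihb =>
        intro Q hQ
        have : mderiv (Finsupp.single a (b + 1)) Q
            = pderiv a (mderiv (Finsupp.single a b) Q) := by
          rw [Finsupp.single_add, ← mderiv_mderiv, mderiv_single_one]
        rw [this]
        exact hW a _ (ihb Q hQ)
    intro P hP
    rw [← mderiv_mderiv]
    exact ih _ (hsingle b P hP)

lemma diffOp_expand (Θ Ψ F : MvPolynomial σ ℂ) :
    diffOp Θ (diffOp Ψ F) = ∑ m ∈ Θ.support, ∑ m' ∈ Ψ.support,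
      (MvPolynomial.coeff m Θ * MvPolynomial.coeff m' Ψ) • mderiv (m' + m) F := by
  rw [diffOp_apply_sum Θ, diffOp_apply_sum Ψ]
  simp only [mderiv_finset_sum, mderiv_smul, Finset.smul_sum, smul_smul, mderiv_mderiv]

lemma diffOp_comm (Θ Ψ F : MvPolynomial σ ℂ) :
    diffOp Θ (diffOp Ψ F) = diffOp Ψ (diffOp Θ F) := by
  rw [diffOp_expand Θ Ψ F, diffOp_expand Ψ Θ F, Finset.sum_comm]
  refine Finset.sum_congr rfl fun m' _ => Finset.sum_congr rfl fun m _ => ?_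
  rw [mul_comm, add_comm]

lemma supp_single [DecidableEq σ] {P : MvPolynomial σ ℂ} (hP : P.IsHomogeneous 1)
    {m : σ →₀ ℕ} (hm : m ∈ P.support) : ∃ j, m = Finsupp.single j 1 := by
  have hw : (Finsupp.weight 1) m = 1 := hP (mem_support_iff.mp hm)
  have hdeg : m.degree = 1 := by rwa [Finsupp.degree_eq_weight_one]
  have hne : m.support.Nonempty := by
    rw [Finsupp.support_nonempty_iff]
    rintro rfl
    simp [Finsupp.degree] at hdeg
  obtain ⟨j, hj⟩ := hne
  refine ⟨j, ?_⟩
  have hjm : m j ≠ 0 := Finsupp.mem_support_iff.mp hj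
  have hsum : ∑ i ∈ m.support, m i = 1 := hdeg
  rw [← Finset.add_sum_erase _ _ hj] at hsum
  have h1 : m j = 1 ∧ ∑ i ∈ m.support.erase j, m i = 0 := by omega
  have h2 : ∀ i ∈ m.support.erase j, m i = 0 :=
    Finset.sum_eq_zero_iff.mp h1.2
  ext i
  rcases eq_or_ne i j with rfl | hij
  · simp [h1.1]
  · rw [Finsupp.single_eq_of_ne' (Ne.symm hij)]
    by_contra h
    exact h (h2 i (Finset.mem_erase.mpr ⟨hij, Finsupp.mem_support_iff.mpr h⟩))

lemma pderiv_homog_one [DecidableEq σ] {P : MvPolynomial σ ℂ} (hP : P.IsHomogeneous 1)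
    (j : σ) :
    pderiv j P = C (MvPolynomial.coeff (Finsupp.single j 1) P) := by
  conv_lhs => rw [← support_sum_monomial_coeff P]
  rw [map_sum]
  rcases Finset.decidableMem (Finsupp.single j 1) P.support with hmem | hmem
  · rw [Finset.sum_eq_zero, MvPolynomial.notMem_support_iff.mp hmem, map_zero]
    intro k hk
    obtain ⟨t, rfl⟩ := supp_single hP hk
    have htj : t ≠ j := fun h => hmem (h ▸ hk)
    rw [pderiv_monomial, Finsupp.single_eq_of_ne' htj]
    simp
  · rw [Finset.sum_eq_single (Finsupp.single j 1)]
    · rw [pderiv_monomial, Finsupp.single_eq_same, tsub_self]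
      simp
    · intro k hk hne
      obtain ⟨t, rfl⟩ := supp_single hP hk
      have htj : t ≠ j := fun h => hne (by rw [h])
      rw [pderiv_monomial, Finsupp.single_eq_of_ne' htj]
      simp
    · intro h; exact absurd hmem h

lemma diffOp_pow_linear [DecidableEq σ] {α ℓP : MvPolynomial σ ℂ} (hα : α.IsHomogeneous 1)
    (hℓ : ℓP.IsHomogeneous 1) :
    ∃ s : ℂ, diffOp α ℓP = C s ∧
      ∀ e : ℕ, diffOp α (ℓP ^ (e + 1)) = (((e : ℂ) + 1) * s) • ℓP ^ e := by
  classical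
  have hterm : ∀ m ∈ α.support, ∃ b : ℂ, mderiv m ℓP = C b ∧
      ∀ e : ℕ, mderiv m (ℓP ^ (e + 1)) = ((e : ℂ) + 1) • (C b * ℓP ^ e) := by
    intro m hm
    obtain ⟨j, rfl⟩ := supp_single hα hm
    refine ⟨MvPolynomial.coeff (Finsupp.single j 1) ℓP, ?_, ?_⟩
    · rw [mderiv_single_one, pderiv_homog_one hℓ]
    · intro e
      rw [mderiv_single_one, pderiv_pow, pderiv_homog_one hℓ]
      simp only [MvPolynomial.smul_eq_C_mul, map_add, map_one, map_natCast]
      push_cast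
      ring
  choose b hb1 hb2 using hterm
  refine ⟨∑ m ∈ α.support.attach, MvPolynomial.coeff m.1 α * b m.1 m.2, ?_, ?_⟩
  · rw [diffOp_apply_sum, ← Finset.sum_attach α.support
      (fun m => MvPolynomial.coeff m α • mderiv m ℓP), map_sum]
    refine Finset.sum_congr rfl fun m _ => ?_
    rw [hb1 m.1 m.2, C_mul, MvPolynomial.smul_eq_C_mul]
  · intro e
    rw [diffOp_apply_sum, ← Finset.sum_attach α.support
      (fun m => MvPolynomial.coeff m α • mderiv m (ℓP ^ (e + 1)))]
    have : ∀ m : α.support, MvPolynomial.coeff m.1 α • mderiv m.1 (ℓP ^ (e + 1))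
        = ((e : ℂ) + 1) • ((MvPolynomial.coeff m.1 α * b m.1 m.2) • ℓP ^ e) := by
      intro m
      rw [hb2 m.1 m.2 e]
      simp only [MvPolynomial.smul_eq_C_mul, map_add, map_one, map_mul]
      ring
    rw [Finset.sum_congr rfl fun m _ => this m, ← Finset.smul_sum, ← Finset.sum_smul,
      smul_smul]

end StmtAux

/-- If `F = ∑ cᵢ ℓᵢ^d` with every `ℓᵢ` off the hyperplane defined by `α`
(i.e. `α∘ℓᵢ ≠ 0` for all `i`), then `r ≥ al(F) − al(α∘F)`. -/
theorem stmt5 (n d : ℕ) (F : MvPolynomial (Fin n) ℂ) (hF : F ≠ 0)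
    (hFd : F.IsHomogeneous d)
    (α : MvPolynomial (Fin n) ℂ) (hα : α.IsHomogeneous 1)
    (r : ℕ) (c : Fin r → ℂ) (ℓ : Fin r → MvPolynomial (Fin n) ℂ)
    (hℓ : ∀ i, (ℓ i).IsHomogeneous 1)
    (hFsum : F = ∑ i, c i • ℓ i ^ d)
    (hoff : ∀ i, diffOp α (ℓ i) ≠ 0) :
    apolarLength F - apolarLength (diffOp α F) ≤ r := by
  classical
  set A : MvPolynomial (Fin n) ℂ →ₗ[ℂ] MvPolynomial (Fin n) ℂ := diffOpL α with hA
  have hAapp : ∀ G, A G = diffOp α G := fun G => diffOpL_apply α G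
  have hspec : ∀ i : Fin r, ∃ s : ℂ, diffOp α (ℓ i) = C s ∧
      ∀ e : ℕ, diffOp α (ℓ i ^ (e + 1)) = (((e : ℂ) + 1) * s) • ℓ i ^ e :=
    fun i => diffOp_pow_linear hα (hℓ i)
  choose s hsC hspow using hspec
  have hs0 : ∀ i, s i ≠ 0 := by
    intro i h
    exact hoff i (by rw [hsC i, h, map_zero])
  -- the big space V
  set g : Fin r × Fin (d + 1) → MvPolynomial (Fin n) ℂ :=
    fun p => ℓ p.1 ^ (p.2 : ℕ) with hg
  set V : Submodule ℂ (MvPolynomial (Fin n) ℂ) := Submodule.span ℂ (Set.range g) with hV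
  haveI : FiniteDimensional ℂ V := FiniteDimensional.span_of_finite ℂ (Set.finite_range g)
  have hgen : ∀ (i : Fin r) (e : ℕ), e ≤ d → ℓ i ^ e ∈ V := by
    intro i e he
    exact Submodule.subset_span ⟨(i, ⟨e, Nat.lt_succ_of_le he⟩), rfl⟩
  have hFV : F ∈ V := by
    rw [hFsum]
    exact Submodule.sum_mem _ fun i _ => Submodule.smul_mem _ _ (hgen i d le_rfl)
  -- V is closed under partial derivatives, hence under mderiv
  have hVp : ∀ (j : Fin n) P, P ∈ V → pderiv j P ∈ V := by
    intro j P hP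
    have hmap : V.map (pderiv j).toLinearMap ≤ V := by
      rw [hV, Submodule.map_span, Submodule.span_le]
      rintro G ⟨G', ⟨⟨i, e⟩, rfl⟩, rfl⟩
      have he : (e : ℕ) ≤ d := Nat.lt_succ_iff.mp e.2
      show pderiv j (ℓ i ^ ((e : Fin (d + 1)) : ℕ)) ∈ V
      rcases Nat.eq_zero_or_pos (e : ℕ) with h0 | hpos
      · rw [h0, pow_zero]
        simpa using Submodule.zero_mem V
      · obtain ⟨e', he'⟩ : ∃ e', (e : ℕ) = e' + 1 := ⟨(e : ℕ) - 1, by omega⟩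
        rw [he']
        have heq : pderiv j (ℓ i ^ (e' + 1)) =
            (((e' + 1 : ℕ) : ℂ) *
              MvPolynomial.coeff (Finsupp.single j 1) (ℓ i)) • ℓ i ^ e' := by
          rw [pderiv_pow, pderiv_homog_one (hℓ i), Nat.add_sub_cancel,
            MvPolynomial.smul_eq_C_mul, map_mul, MvPolynomial.C_eq_coe_nat]
          ring
        rw [heq]
        exact Submodule.smul_mem _ _ (hgen i _ (by omega))
    exact hmap ⟨P, hP, rfl⟩
  have hVm := mderiv_mem_of_closed V hVp
  -- Diff(F) ⊆ V
  set D : Submodule ℂ (MvPolynomial (Fin n) ℂ) :=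
    Submodule.span ℂ (Set.range fun Θ => diffOp Θ F) with hD
  have hDV : D ≤ V := by
    rw [hD, Submodule.span_le]
    rintro G ⟨Θ, rfl⟩
    show diffOp Θ F ∈ V
    rw [diffOp_apply_sum]
    exact Submodule.sum_mem _ fun m _ => Submodule.smul_mem _ _ (hVm m F hFV)
  haveI : FiniteDimensional ℂ D := Submodule.finiteDimensional_of_le hDV
  -- Diff(α ∘ F) = A(D)
  have hD2 : Submodule.span ℂ (Set.range fun Θ => diffOp Θ (diffOp α F))
      = Submodule.map A D := by
    have hset : (Set.range fun Θ => diffOp Θ (diffOp α F))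
        = A '' (Set.range fun Θ => diffOp Θ F) := by
      ext G
      simp only [Set.mem_image, Set.mem_range]
      constructor
      · rintro ⟨Θ, rfl⟩
        exact ⟨diffOp Θ F, ⟨Θ, rfl⟩, by rw [hAapp, diffOp_comm]⟩
      · rintro ⟨G', ⟨Θ, rfl⟩, rfl⟩
        exact ⟨Θ, by rw [hAapp, diffOp_comm]⟩
    rw [hD, hset, Submodule.map_span]
  -- rank-nullity on D and V
  have h1 := LinearMap.finrank_range_add_finrank_ker (A.domRestrict D)
  rw [LinearMap.range_domRestrict] at h1
  have h2 := LinearMap.finrank_range_add_finrank_ker (A.domRestrict V)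
  rw [LinearMap.range_domRestrict] at h2
  -- kernel of A on D injects into kernel of A on V
  have hmem : ∀ x : LinearMap.ker (A.domRestrict D),
      ((Submodule.inclusion hDV).comp (LinearMap.ker (A.domRestrict D)).subtype) x ∈
        LinearMap.ker (A.domRestrict V) := by
    rintro ⟨⟨x, hxD⟩, hx⟩
    rw [LinearMap.mem_ker] at hx ⊢
    simpa using hx
  set φ : LinearMap.ker (A.domRestrict D) →ₗ[ℂ] LinearMap.ker (A.domRestrict V) :=
    LinearMap.codRestrict _ _ hmem with hφ
  have hφinj : Function.Injective φ := by
    rintro ⟨⟨x, hxD⟩, hx⟩ ⟨⟨y, hyD⟩, hy⟩ hxy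
    have : x = y := congrArg (fun z => ((z : V) : MvPolynomial (Fin n) ℂ))
      (congrArg Subtype.val hxy)
    simp only [Subtype.mk.injEq]
    exact this
  have h3 : Module.finrank ℂ (LinearMap.ker (A.domRestrict D)) ≤
      Module.finrank ℂ (LinearMap.ker (A.domRestrict V)) :=
    LinearMap.finrank_le_finrank_of_injective hφinj
  -- the smaller spaces V' and W
  set g' : Fin r × Fin d → MvPolynomial (Fin n) ℂ := fun p => ℓ p.1 ^ (p.2 : ℕ) with hg'
  set V' : Submodule ℂ (MvPolynomial (Fin n) ℂ) := Submodule.span ℂ (Set.range g') with hV'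
  set W : Submodule ℂ (MvPolynomial (Fin n) ℂ) :=
    Submodule.span ℂ (Set.range fun i : Fin r => ℓ i ^ d) with hW
  haveI : FiniteDimensional ℂ V' := FiniteDimensional.span_of_finite ℂ (Set.finite_range g')
  haveI : FiniteDimensional ℂ W :=
    FiniteDimensional.span_of_finite ℂ (Set.finite_range _)
  haveI : FiniteDimensional ℂ (Submodule.map A V) := by
    rw [← LinearMap.range_domRestrict]
    infer_instance
  have h4 : V' ≤ Submodule.map A V := by
    rw [hV', Submodule.span_le]
    rintro G ⟨⟨i, e⟩, rfl⟩
    have he : (e : ℕ) < d := e.2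
    refine Submodule.mem_map.mpr
      ⟨((((e : ℕ) : ℂ) + 1) * s i)⁻¹ • ℓ i ^ ((e : ℕ) + 1),
        Submodule.smul_mem _ _ (hgen i _ (by omega)), ?_⟩
    rw [map_smul, hAapp, hspow i (e : ℕ), smul_smul, inv_mul_cancel₀, one_smul]
    exact mul_ne_zero (by exact_mod_cast Nat.succ_ne_zero (e : ℕ)) (hs0 i)
  have h5 : V ≤ V' ⊔ W := by
    rw [hV, Submodule.span_le]
    rintro G ⟨⟨i, e⟩, rfl⟩
    have he : (e : ℕ) ≤ d := Nat.lt_succ_iff.mp e.2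
    rcases eq_or_lt_of_le he with heq | hlt
    · refine Submodule.mem_sup_right (Submodule.subset_span ⟨i, ?_⟩)
      simp only [hg, heq]
    · exact Submodule.mem_sup_left (Submodule.subset_span ⟨(i, ⟨(e : ℕ), hlt⟩), rfl⟩)
  have h6a : Module.finrank ℂ V ≤ Module.finrank ℂ ((V' ⊔ W :) : Submodule ℂ _) :=
    Submodule.finrank_mono h5
  have h6b : Module.finrank ℂ ((V' ⊔ W :) : Submodule ℂ _) ≤
      Module.finrank ℂ V' + Module.finrank ℂ W :=
    Submodule.finrank_add_le_finrank_add_finrank V' W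
  have h6c : Module.finrank ℂ W ≤ r := by
    have := finrank_range_le_card (R := ℂ) (fun i : Fin r => ℓ i ^ d)
    rw [Set.finrank] at this
    simpa using this
  have h7 : Module.finrank ℂ V' ≤ Module.finrank ℂ (Submodule.map A V) :=
    Submodule.finrank_mono h4
  have hal1 : apolarLength F = Module.finrank ℂ D := rfl
  have hal2 : apolarLength (diffOp α F) = Module.finrank ℂ (Submodule.map A D) := by
    rw [apolarLength, hD2]
  rw [hal1, hal2]
  omega
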